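/- arXiv:2303.07391 — 4 statements merged into one kernel-verified Lean document; each statement's English description precedes it below -/
import Mathlib

section
/- Second bound of Theorem 1 (diagram-existence bound). Let V be a finite vertex type, let E be a finite multiset of unordered pairs of vertices (elements of Sym2 V; multiple edges and self-loops allowed) — the internal edges — and let ext : V → ℕ give the number of external legs at each vertex. Let S be a subset of V of cardinality N ≥ 1 (the EFT insertion vertices), and assume every vertex not in S has total degree at least 2. Set s = Σ_v ext(v), I = card(E) counted with multiplicity, and define the loop number as the integer L = I − card(V) + 1. Then 2·(L + N − 1) ≥ (Σ_{v ∈ S} deg(v)) − s; equivalently, L ≥ ½(Σ_{v∈S} deg(v) − s) − N + 1. In particular, every Feynman graph with s external legs and N insertions of operators of lengths ℓ_1, …, ℓ_N satisfies L ≥ ½(Σ_i ℓ_i − s) − N + 1. -/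
lemma sum_count_univ {V : Type*} [Fintype V] [DecidableEq V] (M : Multiset V) :
    ∑ v, M.count v = Multiset.card M := by
  rw [← Multiset.toFinset_sum_count_eq M]
  exact (Finset.sum_subset (Finset.subset_univ _) (fun x _ hx => by
    simpa [Multiset.count_eq_zero] using fun h => hx (Multiset.mem_toFinset.2 h))).symm

/-- Second bound of Theorem 1 (diagram-existence bound).
A Feynman multigraph: finite vertex type `V`, internal edges given by a
multiset `E` of unordered pairs (`Sym2 V`, multiple edges and self-loops
allowed), and `ext v` external legs at each vertex.  The total degree of `v`
is `ext v` plus the number of internal edge-endpoints at `v` (a self-loop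
counting twice).  If `S` is the set of `N ≥ 1` EFT insertion vertices and
every vertex outside `S` has total degree at least 2, then with
`s = Σ_v ext v`, `I = card E` and loop number `L = I − card V + 1` we have
`2·(L + N − 1) ≥ (Σ_{v ∈ S} deg v) − s`. -/
theorem second_bound_diagram_existence
    {V : Type*} [Fintype V] [DecidableEq V]
    (E : Multiset (Sym2 V)) (ext : V → ℕ)
    (S : Finset V) (N : ℕ) (hSN : S.card = N) (hN : 1 ≤ N)
    (deg : V → ℕ)
    (hdeg : ∀ v, deg v =
      ext v + (E.bind fun e => ((Sym2.equivMultiset V) e : Multiset V)).count v)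
    (hrenorm : ∀ v ∉ S, 2 ≤ deg v)
    (s I : ℕ) (hs : s = ∑ v, ext v) (hI : I = Multiset.card E)
    (L : ℤ) (hL : L = (I : ℤ) - (Fintype.card V : ℤ) + 1) :
    2 * (L + (N : ℤ) - 1) ≥ (∑ v ∈ S, (deg v : ℤ)) - (s : ℤ) := by
  -- handshake: ∑ deg = s + 2I
  have hcard : Multiset.card (E.bind fun e => ((Sym2.equivMultiset V) e : Multiset V))
      = 2 * Multiset.card E := by
    rw [Multiset.card_bind]
    have : (Multiset.map (Multiset.card ∘ fun e => ((Sym2.equivMultiset V) e : Multiset V)) E)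
        = Multiset.map (fun _ => 2) E :=
      Multiset.map_congr rfl (fun e _ => ((Sym2.equivMultiset V) e).2)
    rw [this, Multiset.map_const', Multiset.sum_replicate, smul_eq_mul, mul_comm]
  have hhand : ∑ v, deg v = s + 2 * I := by
    simp only [hdeg, Finset.sum_add_distrib, hs, hI, sum_count_univ, hcard]
  have hsplit : ∑ v ∈ S, deg v + ∑ v ∈ Sᶜ, deg v = ∑ v, deg v := by
    rw [← Finset.sum_add_sum_compl S]
  have hcomp : 2 * (Fintype.card V - N) ≤ ∑ v ∈ Sᶜ, deg v := by
    calc 2 * (Fintype.card V - N) = ∑ v ∈ Sᶜ, 2 := by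
          rw [Finset.sum_const, Finset.card_compl, hSN, smul_eq_mul, mul_comm]
      _ ≤ ∑ v ∈ Sᶜ, deg v :=
          Finset.sum_le_sum fun v hv => hrenorm v (Finset.mem_compl.1 hv)
  have hNle : N ≤ Fintype.card V := hSN ▸ S.card_le_univ
  have : ∑ v ∈ S, deg v + 2 * (Fintype.card V - N) ≤ s + 2 * I := by
    omega
  have hz : (∑ v ∈ S, (deg v : ℤ)) = ((∑ v ∈ S, deg v : ℕ) : ℤ) := by
    push_cast; ring
  rw [hz, hL]
  have := this
  omega
end

section
/- Combinatorial core of Lemma 3 (cut-vertex decomposition bound). Let s, ℓ₁, E, k, I_G, V_G, I_γ, V_γ be natural numbers and define the integers L_G = I_G − V_G + 1 and L_γ = I_γ − V_γ + k. Assume: (a) V_G = V_γ + 1, E ≤ ℓ₁, and I_G = I_γ + (ℓ₁ − E) (the graph G is obtained from a graph γ by adding a single insertion vertex of total degree ℓ₁ that carries E external legs and is joined to γ by ℓ₁ − E internal edges); (b) L_γ ≥ 0 (the loop number of γ, where k is its number of connected components, is non-negative); (c) k ≥ 1 (the insertion vertex is not the whole graph); and (d) 2k ≤ s − E (each of the k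 connected components of γ is attached to at least two of the remaining s − E external legs, as required for G not to be scaleless). Then L_G ≥ ℓ₁ − s + 1. Consequently, every non-scaleless connected Feynman graph with s external legs and an insertion vertex of degree ℓ₁ > s has at least ℓ₁ − s + 1 loops, so the amplitude A_s[𝒪_{i_1},…,𝒪_{i_N}] vanishes at all loop orders L ≤ max(ℓ₁,…,ℓ_N) − s. -/
/-- Combinatorial core of Lemma 3 (cut-vertex decomposition bound).
`G` is obtained from a graph `γ` (with `k` connected components, `I_γ`
internal edges and `V_γ` vertices) by adding a single insertion vertex of
total degree `ℓ₁` carrying `E` external legs, joined to `γ` by `ℓ₁ − E`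
internal edges.  If the loop number `L_γ = I_γ − V_γ + k` is non-negative,
`k ≥ 1`, and each of the `k` components of `γ` is attached to at least two of
the remaining `s − E` external legs (`2k ≤ s − E`, needed for `G` not to be
scaleless), then the loop number `L_G = I_G − V_G + 1` of `G` satisfies
`L_G ≥ ℓ₁ − s + 1`. -/
theorem cut_vertex_decomposition_bound
    (s ℓ₁ E k I_G V_G I_γ V_γ : ℕ)
    (L_G L_γ : ℤ)
    (hLG : L_G = (I_G : ℤ) - (V_G : ℤ) + 1)
    (hLγ : L_γ = (I_γ : ℤ) - (V_γ : ℤ) + (k : ℤ))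
    (hV : V_G = V_γ + 1)
    (hE : E ≤ ℓ₁)
    (hI : I_G = I_γ + (ℓ₁ - E))
    (hLγ0 : 0 ≤ L_γ)
    (hk : 1 ≤ k)
    (hext : 2 * (k : ℤ) ≤ (s : ℤ) - (E : ℤ)) :
    L_G ≥ (ℓ₁ : ℤ) - (s : ℤ) + 1 := by
  subst hLG hLγ hV hI; push_cast [Nat.cast_sub hE]; omega
end

section
/- Triangular-system lemma underlying the proof of Corollary 2 (single insertions). Let F be a field and ℓ ≥ 3 a natural number. Let A : ℕ → ℕ → ℕ → F and Z : ℕ → ℕ → F. Assume: (a) for all s, i, L with s < i and L + s ≤ i, A s i L = 0 (vanishing of amplitudes below the loop bound of Lemma 3); (b) for every s ≥ 3, A s s 0 ≠ 0 (non-vanishing tree-level contact terms of an on-shell basis); (c) for every s ≥ 3 and every L with 1 ≤ L and L + s ≤ ℓ, the master equation Σ_{m=1}^{L} Σ_{i=3}^{ℓ} (Z i m) · (A s i (L−m)) = 0 holds (finiteness of the renormalized amplitude at each loop order). Then Z s L = 0 for all s ≥ 3 and all L with 1 ≤ L and L + s ≤ ℓ. That is, the residue of the simple 1/ε pole of the counterterm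 mixing a length-ℓ operator into a length-s operator vanishes at every loop order L ≤ ℓ − s. -/
/-- Triangular-system lemma underlying the proof of Corollary 2 (single
insertions).  `A s i L` is the finite part of the `L`-loop `s`-point
amplitude with one insertion of a length-`i` operator, and `Z i L` is the
residue of the simple `1/ε` pole at `L` loops of the counterterm mixing the
length-`ℓ` operator into the length-`i` operator.  Assuming the amplitudes
vanish below the loop bound of Lemma 3, the tree-level contact terms of an
on-shell basis are non-zero, and the master equations (finiteness of the
renormalized amplitude) hold, all counterterm residues `Z s L` with `s ≥ 3`,
`L ≥ 1`, `L + s ≤ ℓ` vanish. -/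
theorem triangular_system_single_insertion
    {F : Type*} [Field F] (ℓ : ℕ) (hℓ : 3 ≤ ℓ)
    (A : ℕ → ℕ → ℕ → F) (Z : ℕ → ℕ → F)
    (hA : ∀ s i L, s < i → L + s ≤ i → A s i L = 0)
    (hcontact : ∀ s, 3 ≤ s → A s s 0 ≠ 0)
    (hmaster : ∀ s L, 3 ≤ s → 1 ≤ L → L + s ≤ ℓ →
      ∑ m ∈ Finset.Icc 1 L, ∑ i ∈ Finset.Icc 3 ℓ, Z i m * A s i (L - m) = 0) :
    ∀ s L, 3 ≤ s → 1 ≤ L → L + s ≤ ℓ → Z s L = 0 := by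
  intro s L
  induction L using Nat.strong_induction_on generalizing s with
  | _ L ihL =>
    induction s using Nat.strong_induction_on with
    | _ s ihs =>
      intro hs hL hLs
      have hm := hmaster s L hs hL hLs
      have hLmem : L ∈ Finset.Icc 1 L := by simp [hL]
      have hsmem : s ∈ Finset.Icc 3 ℓ := by
        simp only [Finset.mem_Icc]; omega
      rw [Finset.sum_eq_single_of_mem L hLmem] at hm
      · rw [Finset.sum_eq_single_of_mem s hsmem] at hm
        · simp only [Nat.sub_self] at hm
          rcases mul_eq_zero.mp hm with h | h
          · exact h
          · exact absurd h (hcontact s hs)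
        · intro i hi hne
          simp only [Finset.mem_Icc] at hi
          rcases lt_or_gt_of_ne hne with hlt | hgt
          · rw [ihs i hlt hi.1 hL (by omega), zero_mul]
          · rw [hA s i (L - L) hgt (by omega), mul_zero]
      · intro m hm' hne
        simp only [Finset.mem_Icc] at hm'
        apply Finset.sum_eq_zero
        intro i hi
        simp only [Finset.mem_Icc] at hi
        by_cases hc : m + i ≤ ℓ
        · rw [ihL m (by omega) i hi.1 hm'.1 hc, zero_mul]
        · rw [hA s i (L - m) (by omega) (by omega), mul_zero]
end

section
/- Abstract form of the two-insertion non-renormalization theorem (Section 3.2, N = 2). Let F be a field, let ℓ₁ ≥ ℓ₂ ≥ 3 be natural numbers, and let M ≥ ℓ₁ be a natural number. Let A¹, A² : ℕ → ℕ → ℕ → F and Z¹, Z² : ℕ → ℕ → F. Assume: (a) A¹ s i L = 0 whenever s < i and L + s ≤ i; (b) A² s i L = 0 whenever s < max(i, ℓ₂) and L + s ≤ max(i, ℓ₂) (vanishing below the loop bound of Lemma 3); (c) A¹ s s 0 ≠ 0 for every s ≥ 3 (non-vanishing contact terms of an on-shell basis); (d) Z¹ i m = 0 whenever 1 ≤ m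 and m + i ≤ ℓ₁ (the single-insertion non-renormalization result); (e) for every s ≥ 3 and every L with 1 ≤ L and L + s ≤ ℓ₁, the master equation Σ_{m=1}^{L} Σ_{i=3}^{M} ( (Z¹ i m)·(A² s i (L−m)) + (Z² i m)·(A¹ s i (L−m)) ) = 0 holds. Then Z² s L = 0 for all s ≥ 3 and all L with 1 ≤ L and L + s ≤ ℓ₁. That is, the residue of the simple 1/ε pole of the counterterm mixing two operators of lengths ℓ₁ ≥ ℓ₂ into a length-s operator vanishes at every loop order L ≤ max(ℓ₁, ℓ₂) − s. -/
/-- Abstract form of the two-insertion non-renormalization theorem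
(Section 3.2, `N = 2`).  `A¹ s i L` (resp. `A² s i L`) is the finite part of
the `L`-loop `s`-point amplitude with a single insertion of a length-`i`
operator (resp. with insertions of a length-`i` operator and the fixed
length-`ℓ₂` operator); `Z¹ i m` (resp. `Z² i m`) is the simple-pole residue
at `m` loops of the single-insertion counterterm of the length-`ℓ₁` operator
(resp. of the double-insertion counterterm of the pair `(ℓ₁, ℓ₂)`) into the
length-`i` operator.  Given the vanishings of Lemma 3, non-vanishing contact
terms of an on-shell basis, the single-insertion non-renormalization result,
and the master equations, all residues `Z² s L` with `s ≥ 3`, `L ≥ 1`,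
`L + s ≤ ℓ₁` vanish. -/
theorem two_insertion_nonrenormalization
    {F : Type*} [Field F] (ℓ₁ ℓ₂ M : ℕ)
    (h21 : ℓ₂ ≤ ℓ₁) (h3 : 3 ≤ ℓ₂) (hM : ℓ₁ ≤ M)
    (A₁ A₂ : ℕ → ℕ → ℕ → F) (Z₁ Z₂ : ℕ → ℕ → F)
    (hA₁ : ∀ s i L, s < i → L + s ≤ i → A₁ s i L = 0)
    (hA₂ : ∀ s i L, s < max i ℓ₂ → L + s ≤ max i ℓ₂ → A₂ s i L = 0)
    (hcontact : ∀ s, 3 ≤ s → A₁ s s 0 ≠ 0)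
    (hZ₁ : ∀ i m, 1 ≤ m → m + i ≤ ℓ₁ → Z₁ i m = 0)
    (hmaster : ∀ s L, 3 ≤ s → 1 ≤ L → L + s ≤ ℓ₁ →
      ∑ m ∈ Finset.Icc 1 L, ∑ i ∈ Finset.Icc 3 M,
        (Z₁ i m * A₂ s i (L - m) + Z₂ i m * A₁ s i (L - m)) = 0) :
    ∀ s L, 3 ≤ s → 1 ≤ L → L + s ≤ ℓ₁ → Z₂ s L = 0 := by
  suffices H : ∀ n s L, 3 ≤ s → 1 ≤ L → L + s ≤ ℓ₁ → L + s = n → Z₂ s L = 0 by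
    intro s L hs hL hLs; exact H (L + s) s L hs hL hLs rfl
  intro n
  induction n using Nat.strong_induction_on with
  | _ n ih =>
    intro s L hs hL hLs hn
    have master := hmaster s L hs hL hLs
    -- every Z₁-term vanishes
    have hZpart : ∀ m i, 1 ≤ m → m ≤ L → Z₁ i m * A₂ s i (L - m) = 0 := by
      intro m i hm hmL
      by_cases h : m + i ≤ ℓ₁
      · rw [hZ₁ i m hm h, zero_mul]
      · have hsi : s < i := by omega
        have h1 : s < max i ℓ₂ := lt_of_lt_of_le hsi (le_max_left _ _)
        have h2 : L - m + s ≤ max i ℓ₂ := le_trans (by omega) (le_max_left i ℓ₂)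
        rw [hA₂ s i (L - m) h1 h2, mul_zero]
    -- every off-diagonal Z₂-term vanishes
    have hZ2part : ∀ m i, 1 ≤ m → m ≤ L → 3 ≤ i → ¬(m = L ∧ i = s) →
        Z₂ i m * A₁ s i (L - m) = 0 := by
      intro m i hm hmL hi hne
      by_cases h1 : s < i ∧ L - m + s ≤ i
      · rw [hA₁ s i (L - m) h1.1 h1.2, mul_zero]
      · have hlt : m + i < L + s := by omega
        rw [ih (m + i) (by omega) i m hi hm (by omega) rfl, zero_mul]
    -- the sum collapses to the diagonal term
    have hsM : s ≤ M := by omega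
    have hsum : (∑ m ∈ Finset.Icc 1 L, ∑ i ∈ Finset.Icc 3 M,
        (Z₁ i m * A₂ s i (L - m) + Z₂ i m * A₁ s i (L - m)))
        = Z₂ s L * A₁ s s 0 := by
      rw [Finset.sum_eq_single_of_mem L (Finset.mem_Icc.mpr ⟨hL, le_refl L⟩)]
      · rw [Finset.sum_eq_single_of_mem s (Finset.mem_Icc.mpr ⟨hs, hsM⟩)]
        · rw [hZpart L s hL (le_refl L), zero_add, Nat.sub_self]
        · intro i hi hine
          have hi' := Finset.mem_Icc.mp hi
          rw [hZpart L i hL (le_refl L),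
            hZ2part L i hL (le_refl L) hi'.1 (by tauto), zero_add]
      · intro m hm hmne
        have hm' := Finset.mem_Icc.mp hm
        apply Finset.sum_eq_zero
        intro i hi
        have hi' := Finset.mem_Icc.mp hi
        rw [hZpart m i hm'.1 hm'.2,
          hZ2part m i hm'.1 hm'.2 hi'.1 (by tauto), zero_add]
    rw [hsum] at master
    exact (mul_eq_zero.mp master).resolve_right (hcontact s hs)
end
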